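/- Over {a<b<c}, for any words u ∈ {b,c}* and exponents α, β ≥ 0 with α ≥ β, the words a b^α c u c b^β a and a b^{α-β} c b^β u b^β c a are M-equivalent. -/
import Mathlib

open List

/-- Number of occurrences of `v` as a scattered subsequence of `w`. -/
def scount {α : Type*} [DecidableEq α] (w v : List α) : ℕ := w.sublists.count v

/-- The ternary ordered alphabet {a < b < c}. -/
inductive ABC | a | b | c
deriving DecidableEq

open ABC

/-- M-equivalence over the ordered alphabet {a < b < c}. -/
def MEq3 (w w' : List ABC) : Prop :=
  scount w [a] = scount w' [a] ∧ scount w [b] = scount w' [b] ∧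
  scount w [c] = scount w' [c] ∧ scount w [a, b] = scount w' [a, b] ∧
  scount w [b, c] = scount w' [b, c] ∧ scount w [a, b, c] = scount w' [a, b, c]

/-- Projection onto {a, c}: erase all b's. -/
def projAC (w : List ABC) : List ABC := w.filter (· ≠ b)

abbrev A (k : ℕ) : List ABC := List.replicate k a
abbrev B (k : ℕ) : List ABC := List.replicate k b
abbrev C (k : ℕ) : List ABC := List.replicate k c

section aux
variable {σ : Type*} [DecidableEq σ]

private lemma sum_ite_count (v : σ) (l : List σ) :
    (l.map (fun s => if s = v then 1 else 0)).sum = count v l := by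
  induction l with
  | nil => simp
  | cons h t ih =>
    simp only [map_cons, sum_cons, ih, count_cons, beq_iff_eq]
    by_cases hv : h = v <;> simp [hv] <;> omega

private lemma sum_ite_count' (v : List σ) (l : List (List σ)) :
    (l.map (fun s => if s = v then 1 else 0)).sum = count v l := by
  induction l with
  | nil => simp
  | cons h t ih =>
    simp only [map_cons, sum_cons, ih, count_cons, beq_iff_eq]
    by_cases hv : h = v <;> simp [hv] <;> omega

lemma scount_cons (x : σ) (w v : List σ) :
    scount (x::w) v = scount w v +
      (match v with | [] => 0 | y::v' => if x = y then scount w v' else 0) := by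
  unfold scount
  rw [sublists_cons]
  rw [show (do let s ← w.sublists; [s, x :: s]) = w.sublists.flatMap (fun s => [s, x :: s]) from rfl]
  rw [count_flatMap]
  have h : (count v ∘ fun s => [s, x :: s]) =
      fun s => (if s = v then 1 else 0) + (if x :: s = v then 1 else 0) := by
    funext s
    simp only [Function.comp, count_cons, count_nil, beq_iff_eq]
    ring
  rw [h, sum_map_add, sum_ite_count']
  have h2 : (map (fun s => if x :: s = v then 1 else 0) w.sublists).sum =
      (match v with | [] => 0 | y::v' => if x = y then count v' w.sublists else 0) := by
    cases v with
    | nil => simp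
    | cons y v' =>
      show _ = if x = y then count v' w.sublists else 0
      by_cases hxy : x = y
      · subst hxy
        rw [if_pos rfl, ← sum_ite_count']
        congr 1
        apply map_congr_left
        intro s _
        simp
      · rw [if_neg hxy, map_congr_left (g := fun _ => (0:ℕ)) (fun s _ => by simp [hxy])]
        simp
  rw [h2]

lemma scount_cons_cons (x : σ) (w : List σ) (y : σ) (v : List σ) :
    scount (x::w) (y::v) = scount w (y::v) + if x = y then scount w v else 0 := by
  rw [scount_cons]

@[simp] lemma scount_nil_pat (w : List σ) : scount w [] = 1 := by
  induction w with
  | nil => simp [scount, sublists_nil]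
  | cons h t ih => rw [scount_cons]; simpa using ih

@[simp] lemma scount_nil (v : List σ) : scount ([] : List σ) v = if v = [] then 1 else 0 := by
  cases v <;> simp [scount, sublists_nil]

lemma scount_append1 (w₁ w₂ : List σ) (x : σ) :
    scount (w₁ ++ w₂) [x] = scount w₁ [x] + scount w₂ [x] := by
  induction w₁ with
  | nil => simp
  | cons h t ih =>
    simp only [cons_append, scount_cons_cons, ih, scount_nil_pat]
    split <;> omega

lemma scount_append2 (w₁ w₂ : List σ) (x y : σ) :
    scount (w₁ ++ w₂) [x, y] =
      scount w₁ [x, y] + scount w₁ [x] * scount w₂ [y] + scount w₂ [x, y] := by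
  induction w₁ with
  | nil => simp
  | cons h t ih =>
    simp only [cons_append, scount_cons_cons, ih, scount_append1, scount_nil_pat]
    split <;> ring

lemma scount_append3 (w₁ w₂ : List σ) (x y z : σ) :
    scount (w₁ ++ w₂) [x, y, z] =
      scount w₁ [x, y, z] + scount w₁ [x, y] * scount w₂ [z] +
      scount w₁ [x] * scount w₂ [y, z] + scount w₂ [x, y, z] := by
  induction w₁ with
  | nil => simp
  | cons h t ih =>
    simp only [cons_append, scount_cons_cons, ih, scount_append1, scount_append2,
      scount_nil_pat]
    split <;> ring

lemma scount_eq_zero {w v : List σ} (h : ¬ v <+ w) : scount w v = 0 := by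
  unfold scount
  rw [count_eq_zero]
  simpa [mem_sublists] using h

lemma scount_eq_zero_of_not_mem {w v : List σ} {z : σ} (hz : z ∈ v) (hw : z ∉ w) :
    scount w v = 0 :=
  scount_eq_zero fun hs => hw (hs.subset hz)

lemma scount_replicate_one (k : ℕ) (y x : σ) :
    scount (replicate k y) [x] = if x = y then k else 0 := by
  induction k with
  | zero => simp
  | succ n ih =>
    rw [replicate_succ, scount_cons_cons, ih, scount_nil_pat]
    by_cases hxy : x = y
    · simp [hxy]
    · simp [hxy, Ne.symm hxy]

lemma scount_replicate_ne {k : ℕ} {y z : σ} {v : List σ} (hz : z ∈ v) (hzy : z ≠ y) :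
    scount (replicate k y) v = 0 :=
  scount_eq_zero_of_not_mem hz (by simp [hzy])

end aux

lemma a_not_mem_u {u : List ABC} (hu : ∀ x ∈ u, x = b ∨ x = c) : a ∉ u := by
  intro h
  rcases hu a h with h' | h' <;> simp at h'

theorem stmt_7 (u : List ABC) (hu : ∀ x ∈ u, x = b ∨ x = c)
    (α β : ℕ) (hβα : β ≤ α) :
    MEq3 ([a] ++ B α ++ [c] ++ u ++ [c] ++ B β ++ [a])
      ([a] ++ B (α - β) ++ [c] ++ B β ++ u ++ B β ++ [c] ++ [a]) := by
  obtain ⟨γ, rfl⟩ := Nat.exists_eq_add_of_le hβα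
  have hγ : β + γ - β = γ := by omega
  have hau := a_not_mem_u hu
  have h1 : scount u [a] = 0 := scount_eq_zero_of_not_mem (by simp) hau
  have h2 : scount u [a, b] = 0 := scount_eq_zero_of_not_mem (by simp) hau
  have h3 : scount u [a, b, c] = 0 := scount_eq_zero_of_not_mem (by simp) hau
  have hBa : ∀ k, scount (B k) [a] = 0 := fun k => scount_replicate_ne (z := a) (by simp) (by simp)
  have hBc : ∀ k, scount (B k) [c] = 0 := fun k => scount_replicate_ne (z := c) (by simp) (by simp)
  have hBb : ∀ k, scount (B k) [b] = k := fun k => by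
    rw [scount_replicate_one, if_pos rfl]
  have hBab : ∀ k, scount (B k) [a, b] = 0 := fun k =>
    scount_replicate_ne (z := a) (by simp) (by simp)
  have hBbc : ∀ k, scount (B k) [b, c] = 0 := fun k =>
    scount_replicate_ne (z := c) (by simp) (by simp)
  have hBabc : ∀ k, scount (B k) [a, b, c] = 0 := fun k =>
    scount_replicate_ne (z := a) (by simp) (by simp)
  have hs1 : ∀ x y : ABC, scount [x] [y] = if y = x then 1 else 0 := fun x y => by
    rw [show [x] = replicate 1 x from rfl, scount_replicate_one]
  have hs2 : ∀ x y z : ABC, scount [x] [y, z] = 0 := by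
    intro x y z
    apply scount_eq_zero
    intro h
    have := h.length_le
    simp at this
  have hs3 : ∀ x y z w : ABC, scount [x] [y, z, w] = 0 := by
    intro x y z w
    apply scount_eq_zero
    intro h
    have := h.length_le
    simp at this
  refine ⟨?_, ?_, ?_, ?_, ?_, ?_⟩ <;>
    simp only [scount_append1, scount_append2, scount_append3, h1, h2, h3, hBa, hBb, hBc,
      hBab, hBbc, hBabc, hs1, hs2, hs3, hγ, reduceCtorEq, reduceIte, if_true, if_false,
      mul_zero, zero_mul, mul_one, one_mul, add_zero, zero_add] <;>
    ring
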